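/- For PT₁ started from the empty automaton, the set of accepted strings at any stage is finite, and for each length n there exists a stage and a sequence of inputs after which PT₁ rejects every string of length n that halts in a freshly-created intermediate state: specifically, if one inputs all strings of length n+1 in any order before any string of length n, then every string z of length n either crashes and is accepted with new states, or halts in a state one-step away from an accepting state and whose acceptance status is determined by the prior inputs. -/

import Mathlib

/-- NFA₁: nondeterministic finite automata over Σ = {0,1} with at most one
transition per (state, letter) pair (hence transitions given by a partial function). -/
structure NFA1 where
  states : Finset ℕ
  start : ℕ
  trans : ℕ → Bool → Option ℕ
  accept : Finset ℕ

/-- Run the automaton, returning the halting/crash state together with the unread suffix. -/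
def runPartial (M : NFA1) : ℕ → List Bool → ℕ × List Bool
  | q, [] => (q, [])
  | q, a :: x =>
    match M.trans q a with
    | none => (q, a :: x)
    | some p => runPartial M p x

/-- `M` reads `x` completely and halts in an accepting state. -/
def NFA1.Accepts (M : NFA1) (x : List Bool) : Prop :=
  (runPartial M M.start x).2 = [] ∧ (runPartial M M.start x).1 ∈ M.accept

/-- `p` has a one-step transition into an accepting state. -/
def oneStepAcc (M : NFA1) (p : ℕ) : Bool :=
  ((M.trans p true).map (fun q => decide (q ∈ M.accept))).getD false ||
  ((M.trans p false).map (fun q => decide (q ∈ M.accept))).getD false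

/-- Case 3 of `Evolve`: append a chain of fresh states spelling `rest` from the crash state `p`,
with the final fresh state accepting. -/
def addChain (M : NFA1) (p : ℕ) (rest : List Bool) : NFA1 :=
  let base := (M.states.sup id) + 1
  { states := M.states ∪ (Finset.range rest.length).image (fun i => base + i)
    start := M.start
    trans := fun q a =>
      match (List.range rest.length).find? (fun i =>
          decide ((if i = 0 then p else base + (i - 1)) = q) && decide (rest[i]? = some a)) with
      | some i => some (base + i)
      | none => M.trans q a
    accept := M.accept ∪ {base + (rest.length - 1)} }

/-- The evolution operation on NFA₁ automata. -/
def Evolve (M : NFA1) (x : List Bool) : NFA1 :=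
  match runPartial M M.start x with
  | (p, []) =>
    if p ∈ M.accept then M
    else if oneStepAcc M p then M
    else { M with accept := insert p M.accept }
  | (p, rest) => addChain M p rest

/-- The empty automaton: a single state `q₀ = 0`, no transitions, no accepting states. -/
def emptyNFA : NFA1 := ⟨{0}, 0, fun _ _ => none, ∅⟩

/-- The state of PT₁ after processing the inputs `xs` in order, starting from the empty automaton. -/
def evolveAll (xs : List (List Bool)) : NFA1 := xs.foldl Evolve emptyNFA

/-- Running PT₁ on input `x` from automaton-state `M`: the automaton first evolves on `x`
and `x` is accepted iff the evolved automaton accepts it. -/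
def PT1AcceptB (M : NFA1) (x : List Bool) : Bool :=
  let M' := Evolve M x
  decide ((runPartial M' M'.start x).2 = []) && decide ((runPartial M' M'.start x).1 ∈ M'.accept)

lemma runPartial_nil (M : NFA1) (q : ℕ) : runPartial M q [] = (q, []) := rfl

lemma runPartial_cons (M : NFA1) (q : ℕ) (a : Bool) (x : List Bool) :
    runPartial M q (a :: x) =
      match M.trans q a with
      | none => (q, a :: x)
      | some p => runPartial M p x := rfl

lemma run_append_full {M : NFA1} {q : ℕ} {x : List Bool} {p : ℕ}
    (h : runPartial M q x = (p, [])) (y : List Bool) :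
    runPartial M q (x ++ y) = runPartial M p y := by
  induction x generalizing q with
  | nil =>
    rw [runPartial_nil, Prod.mk.injEq] at h
    obtain ⟨rfl, -⟩ := h
    rfl
  | cons a x ih =>
    rw [runPartial_cons] at h
    rw [List.cons_append, runPartial_cons]
    cases htr : M.trans q a with
    | none => rw [htr] at h; simp [Prod.ext_iff] at h
    | some p' => rw [htr] at h; simp only at h ⊢; exact ih h

lemma run_append_crash {M : NFA1} {q : ℕ} {x : List Bool} {p : ℕ} {r : List Bool}
    (h : runPartial M q x = (p, r)) (hr : r ≠ []) (y : List Bool) :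
    runPartial M q (x ++ y) = (p, r ++ y) := by
  induction x generalizing q with
  | nil =>
    rw [runPartial_nil, Prod.mk.injEq] at h
    obtain ⟨rfl, rfl⟩ := h
    exact absurd rfl hr
  | cons a x ih =>
    rw [runPartial_cons] at h
    rw [List.cons_append, runPartial_cons]
    cases htr : M.trans q a with
    | none =>
      rw [htr] at h
      simp only [Prod.mk.injEq] at h
      obtain ⟨rfl, rfl⟩ := h
      simp
    | some p' => rw [htr] at h; simp only at h ⊢; exact ih h

lemma run_decomp {M : NFA1} {q : ℕ} {x : List Bool} {p : ℕ} {r : List Bool}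
    (h : runPartial M q x = (p, r)) :
    ∃ x₁, x = x₁ ++ r ∧ runPartial M q x₁ = (p, []) := by
  induction x generalizing q with
  | nil =>
    rw [runPartial_nil, Prod.mk.injEq] at h
    obtain ⟨rfl, rfl⟩ := h
    exact ⟨[], rfl, rfl⟩
  | cons a x ih =>
    rw [runPartial_cons] at h
    cases htr : M.trans q a with
    | none =>
      rw [htr] at h
      simp only [Prod.mk.injEq] at h
      obtain ⟨rfl, rfl⟩ := h
      exact ⟨[], rfl, rfl⟩
    | some p' =>
      rw [htr] at h; simp only at h
      obtain ⟨x₁, rfl, h1⟩ := ih h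
      exact ⟨a :: x₁, rfl, by rw [runPartial_cons, htr]; exact h1⟩

lemma run_crash_head {M : NFA1} {q : ℕ} {x : List Bool} {p : ℕ} {a : Bool} {r : List Bool}
    (h : runPartial M q x = (p, a :: r)) : M.trans p a = none := by
  induction x generalizing q with
  | nil => rw [runPartial_nil, Prod.mk.injEq] at h; simp at h
  | cons b x ih =>
    rw [runPartial_cons] at h
    cases htr : M.trans q b with
    | none =>
      rw [htr] at h
      simp only [Prod.mk.injEq, List.cons.injEq] at h
      obtain ⟨rfl, rfl, rfl⟩ := h
      exact htr
    | some p' => rw [htr] at h; exact ih h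

lemma run_single {M : NFA1} {q : ℕ} {a : Bool} {p : ℕ}
    (h : runPartial M q [a] = (p, [])) : M.trans q a = some p := by
  rw [runPartial_cons] at h
  cases htr : M.trans q a with
  | none => rw [htr] at h; simp [Prod.ext_iff] at h
  | some p' =>
    rw [htr] at h
    simp only [runPartial_nil, Prod.mk.injEq] at h
    rw [h.1]

lemma run_mono {M M' : NFA1} (hext : ∀ q a r, M.trans q a = some r → M'.trans q a = some r)
    {q : ℕ} {x : List Bool} {p : ℕ} (h : runPartial M q x = (p, [])) :
    runPartial M' q x = (p, []) := by
  induction x generalizing q with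
  | nil => exact h
  | cons a x ih =>
    rw [runPartial_cons] at h ⊢
    cases htr : M.trans q a with
    | none => rw [htr] at h; simp [Prod.ext_iff] at h
    | some p' =>
      rw [htr] at h
      rw [hext _ _ _ htr]
      exact ih h

def InvPT (M : NFA1) : Prop :=
  M.start ∈ M.states ∧ (∀ q ∈ M.accept, q ∈ M.states) ∧
  ∀ q a r, M.trans q a = some r → q ∈ M.states ∧ r ∈ M.states ∧ q < r

lemma run_mem_states {M : NFA1} (hI : InvPT M) {q : ℕ} {x : List Bool} {p : ℕ}
    (hq : q ∈ M.states) (h : runPartial M q x = (p, [])) : p ∈ M.states := by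
  induction x generalizing q with
  | nil => rw [runPartial_nil, Prod.mk.injEq] at h; rw [← h.1]; exact hq
  | cons a x ih =>
    rw [runPartial_cons] at h
    cases htr : M.trans q a with
    | none => rw [htr] at h; simp [Prod.ext_iff] at h
    | some p' =>
      rw [htr] at h; simp only at h
      exact ih (hI.2.2 _ _ _ htr).2.1 h

lemma run_le {M : NFA1} (hI : InvPT M) {q : ℕ} {x : List Bool} {p : ℕ}
    (h : runPartial M q x = (p, [])) : q + x.length ≤ p := by
  induction x generalizing q with
  | nil =>
    rw [runPartial_nil, Prod.mk.injEq] at h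
    obtain ⟨rfl, -⟩ := h
    simp
  | cons a x ih =>
    rw [runPartial_cons] at h
    cases htr : M.trans q a with
    | none => rw [htr] at h; simp [Prod.ext_iff] at h
    | some p' =>
      rw [htr] at h; simp only at h
      have h1 := (hI.2.2 _ _ _ htr).2.2
      have h2 := ih h
      simp only [List.length_cons]
      omega

lemma run_depth {M : NFA1} {d : ℕ → ℕ}
    (hd : ∀ q a r, M.trans q a = some r → d r = d q + 1)
    {q : ℕ} {x : List Bool} {p : ℕ} (h : runPartial M q x = (p, [])) :
    d p = d q + x.length := by
  induction x generalizing q with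
  | nil => rw [runPartial_nil, Prod.mk.injEq] at h; rw [← h.1]; simp
  | cons a x ih =>
    rw [runPartial_cons] at h
    cases htr : M.trans q a with
    | none => rw [htr] at h; simp [Prod.ext_iff] at h
    | some p' =>
      rw [htr] at h; simp only at h
      have := ih h
      rw [this, hd _ _ _ htr]
      simp only [List.length_cons]
      omega

lemma oneStepAcc_iff {M : NFA1} {p : ℕ} :
    oneStepAcc M p = true ↔ ∃ a r, M.trans p a = some r ∧ r ∈ M.accept := by
  unfold oneStepAcc
  constructor
  · intro h
    rcases h1 : M.trans p true with _ | r1 <;> rcases h0 : M.trans p false with _ | r0 <;>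
      rw [h1, h0] at h <;> simp at h
    · exact ⟨false, r0, h0, h⟩
    · exact ⟨true, r1, h1, h⟩
    · rcases h with h | h
      · exact ⟨true, r1, h1, h⟩
      · exact ⟨false, r0, h0, h⟩
  · rintro ⟨a, r, hr, hmem⟩
    cases a <;> rw [hr] <;> simp [hmem]

lemma evolve_halt {M : NFA1} {x : List Bool} {p : ℕ}
    (h : runPartial M M.start x = (p, [])) :
    Evolve M x = if p ∈ M.accept then M
      else if oneStepAcc M p then M
      else { M with accept := insert p M.accept } := by
  unfold Evolve
  rw [h]

lemma evolve_crash {M : NFA1} {x : List Bool} {p : ℕ} {a : Bool} {r : List Bool}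
    (h : runPartial M M.start x = (p, a :: r)) :
    Evolve M x = addChain M p (a :: r) := by
  unfold Evolve
  rw [h]

lemma find?_range_eq {P : ℕ → Bool} {L i : ℕ} (hi : i < L) (hp : P i = true)
    (hmin : ∀ j < i, P j = false) : (List.range L).find? P = some i := by
  induction L with
  | zero => omega
  | succ L ih =>
    rw [List.range_succ, List.find?_append]
    rcases Nat.lt_or_ge i L with h | h
    · rw [ih h]; rfl
    · have hiL : i = L := by omega
      subst hiL
      have hnone : (List.range i).find? P = none := by
        rw [List.find?_eq_none]
        intro j hj
        simp only [List.mem_range] at hj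
        simp [hmin j hj]
      rw [hnone]
      simp [hp]

lemma addChain_start (M : NFA1) (p : ℕ) (rest : List Bool) :
    (addChain M p rest).start = M.start := rfl

lemma addChain_accept (M : NFA1) (p : ℕ) (rest : List Bool) :
    (addChain M p rest).accept = M.accept ∪ {(M.states.sup id + 1) + (rest.length - 1)} := rfl

lemma addChain_states (M : NFA1) (p : ℕ) (rest : List Bool) :
    (addChain M p rest).states
      = M.states ∪ (Finset.range rest.length).image (fun i => (M.states.sup id + 1) + i) := rfl

lemma addChain_trans_cases {M : NFA1} {p : ℕ} {rest : List Bool} {q : ℕ} {a : Bool} {r : ℕ}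
    (h : (addChain M p rest).trans q a = some r) :
    (∃ i, i < rest.length ∧ (if i = 0 then p else (M.states.sup id + 1) + (i - 1)) = q ∧
        rest[i]? = some a ∧ r = (M.states.sup id + 1) + i) ∨ M.trans q a = some r := by
  simp only [addChain] at h
  rcases hf : (List.range rest.length).find? (fun i =>
      decide ((if i = 0 then p else (M.states.sup id + 1) + (i - 1)) = q) &&
        decide (rest[i]? = some a)) with _ | i
  · rw [hf] at h
    exact Or.inr h
  · rw [hf] at h
    have hmem := List.mem_of_find?_eq_some hf
    have hpred := List.find?_some hf
    simp only [Bool.and_eq_true, decide_eq_true_eq] at hpred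
    simp only [List.mem_range] at hmem
    simp only [Option.some.injEq] at h
    exact Or.inl ⟨i, hmem, hpred.1, hpred.2, h.symm⟩

lemma mem_states_lt_base {M : NFA1} {q : ℕ} (hq : q ∈ M.states) :
    q < M.states.sup id + 1 :=
  Nat.lt_succ_of_le (Finset.le_sup (f := id) hq)

lemma addChain_trans_chain {M : NFA1} {p : ℕ} {rest : List Bool}
    (hpb : p < M.states.sup id + 1) {i : ℕ} (hi : i < rest.length) {a : Bool}
    (ha : rest[i]? = some a) :
    (addChain M p rest).trans (if i = 0 then p else (M.states.sup id + 1) + (i - 1)) a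
      = some ((M.states.sup id + 1) + i) := by
  have hmin : ∀ j < i, (fun j =>
      decide ((if j = 0 then p else (M.states.sup id + 1) + (j - 1)) =
        (if i = 0 then p else (M.states.sup id + 1) + (i - 1))) &&
      decide (rest[j]? = some a)) j = false := by
    intro j hj
    rcases Nat.eq_zero_or_pos j with rfl | hj0
    · have h1 : i ≠ 0 := by omega
      simp only [h1, reduceIte]
      have h2 : p ≠ (M.states.sup id + 1) + (i - 1) := by omega
      simp [h2]
    · have hj' : j ≠ 0 := by omega
      have hi' : i ≠ 0 := by omega
      simp only [hj', hi', reduceIte]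
      have h2 : (M.states.sup id + 1) + (j - 1) ≠ (M.states.sup id + 1) + (i - 1) := by
        omega
      simp [h2]
      intro h3; omega
  simp only [addChain]
  rw [find?_range_eq hi (by simp [ha]) hmin]

lemma addChain_ext {M : NFA1} (hI : InvPT M) {p : ℕ} {a : Bool} {rs : List Bool}
    (hcr : M.trans p a = none) :
    ∀ q b r, M.trans q b = some r → (addChain M p (a :: rs)).trans q b = some r := by
  intro q b r htr
  simp only [addChain]
  rcases hf : (List.range (a :: rs).length).find? (fun i =>
      decide ((if i = 0 then p else (M.states.sup id + 1) + (i - 1)) = q) &&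
        decide ((a :: rs)[i]? = some b)) with _ | i
  · exact htr
  · exfalso
    have hpred := List.find?_some hf
    simp only [Bool.and_eq_true, decide_eq_true_eq] at hpred
    have hq : q ∈ M.states := (hI.2.2 _ _ _ htr).1
    have hqb := mem_states_lt_base hq
    rcases Nat.eq_zero_or_pos i with rfl | hi0
    · simp only [reduceIte] at hpred
      obtain ⟨rfl, hget⟩ := hpred
      simp only [List.getElem?_cons_zero, Option.some.injEq] at hget
      rw [← hget] at htr
      rw [htr] at hcr
      exact Option.some_ne_none _ hcr
    · have hi' : i ≠ 0 := by omega
      simp only [hi', reduceIte] at hpred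
      omega

lemma addChain_run_aux {M : NFA1} {p : ℕ} {rest : List Bool}
    (hpb : p < M.states.sup id + 1) (hne : rest ≠ []) :
    ∀ k i, i + k = rest.length →
      runPartial (addChain M p rest)
        (if i = 0 then p else (M.states.sup id + 1) + (i - 1)) (rest.drop i)
        = ((M.states.sup id + 1) + (rest.length - 1), []) := by
  intro k
  induction k with
  | zero =>
    intro i hi
    have hiL : i = rest.length := by omega
    have hL : rest.length ≠ 0 := by
      intro h0; exact hne (List.eq_nil_of_length_eq_zero h0)
    rw [hiL, List.drop_length, runPartial_nil]
    have : i ≠ 0 := by omega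
    rw [hiL] at this
    simp [this, hiL]
  | succ k ih =>
    intro i hi
    have hiL : i < rest.length := by omega
    have hdrop : rest.drop i = rest[i] :: rest.drop (i + 1) :=
      List.drop_eq_getElem_cons hiL
    rw [hdrop, runPartial_cons,
      addChain_trans_chain hpb hiL (List.getElem?_eq_getElem hiL)]
    simp only
    have := ih (i + 1) (by omega)
    have hsrc : (if i + 1 = 0 then p else (M.states.sup id + 1) + (i + 1 - 1))
        = (M.states.sup id + 1) + i := by simp
    rw [hsrc] at this
    exact this

lemma addChain_run_full {M : NFA1} (hI : InvPT M) {x : List Bool} {p : ℕ} {rest : List Bool}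
    (h : runPartial M M.start x = (p, rest)) (hne : rest ≠ []) :
    runPartial (addChain M p rest) M.start x
      = ((M.states.sup id + 1) + (rest.length - 1), []) := by
  obtain ⟨x₁, hx, h1⟩ := run_decomp h
  have hp : p ∈ M.states := run_mem_states hI hI.1 h1
  have hpb : p < M.states.sup id + 1 := mem_states_lt_base hp
  rcases rest with _ | ⟨a, rs⟩
  · exact absurd rfl hne
  have hcr := run_crash_head h
  have h1' : runPartial (addChain M p (a :: rs)) M.start x₁ = (p, []) :=
    run_mono (addChain_ext hI hcr) h1
  rw [hx, run_append_full h1']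
  have := addChain_run_aux (rest := a :: rs) hpb hne (a :: rs).length 0 (by omega)
  simpa using this

lemma addChain_accepts_self {M : NFA1} (hI : InvPT M) {x : List Bool} {p : ℕ} {rest : List Bool}
    (h : runPartial M M.start x = (p, rest)) (hne : rest ≠ []) :
    (addChain M p rest).Accepts x := by
  constructor
  · rw [addChain_start, addChain_run_full hI h hne]
  · rw [addChain_start, addChain_run_full hI h hne, addChain_accept]
    exact Finset.mem_union_right _ (Finset.mem_singleton_self _)

def ExtPT (M M' : NFA1) : Prop :=
  M'.start = M.start ∧ (∀ q a r, M.trans q a = some r → M'.trans q a = some r) ∧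
  M.accept ⊆ M'.accept ∧ M.states ⊆ M'.states

lemma ext_refl (M : NFA1) : ExtPT M M :=
  ⟨rfl, fun _ _ _ h => h, Finset.Subset.refl _, Finset.Subset.refl _⟩

lemma ext_trans {M₁ M₂ M₃ : NFA1} (h1 : ExtPT M₁ M₂) (h2 : ExtPT M₂ M₃) : ExtPT M₁ M₃ :=
  ⟨h2.1.trans h1.1, fun q a r h => h2.2.1 q a r (h1.2.1 q a r h),
    h1.2.2.1.trans h2.2.2.1, h1.2.2.2.trans h2.2.2.2⟩

lemma inv_evolve {M : NFA1} (hI : InvPT M) (x : List Bool) : InvPT (Evolve M x) := by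
  rcases hrun : runPartial M M.start x with ⟨p, rest⟩
  rcases rest with _ | ⟨a, rs⟩
  · rw [evolve_halt hrun]
    split_ifs with h1 h2
    · exact hI
    · exact hI
    · refine ⟨hI.1, ?_, hI.2.2⟩
      intro q hq
      rcases Finset.mem_insert.mp hq with rfl | hq
      · exact run_mem_states hI hI.1 hrun
      · exact hI.2.1 q hq
  · rw [evolve_crash hrun]
    have hp : p ∈ M.states := by
      obtain ⟨x₁, -, h1⟩ := run_decomp hrun
      exact run_mem_states hI hI.1 h1
    have hpb := mem_states_lt_base hp
    refine ⟨?_, ?_, ?_⟩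
    · rw [addChain_states]
      exact Finset.mem_union_left _ hI.1
    · intro q hq
      rw [addChain_accept] at hq
      rw [addChain_states]
      rcases Finset.mem_union.mp hq with hq | hq
      · exact Finset.mem_union_left _ (hI.2.1 q hq)
      · rw [Finset.mem_singleton] at hq
        refine Finset.mem_union_right _ (Finset.mem_image.mpr ⟨(a :: rs).length - 1, ?_, hq.symm⟩)
        simp
    · intro q b r htr
      rw [addChain_states]
      rcases addChain_trans_cases htr with ⟨i, hi, hsrc, -, hr⟩ | htr
      · subst hr
        have hrmem : (M.states.sup id + 1) + i
            ∈ (Finset.range (a :: rs).length).image (fun i => (M.states.sup id + 1) + i) :=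
          Finset.mem_image.mpr ⟨i, Finset.mem_range.mpr hi, rfl⟩
        rcases Nat.eq_zero_or_pos i with rfl | hi0
        · simp only [reduceIte] at hsrc
          subst hsrc
          exact ⟨Finset.mem_union_left _ hp, Finset.mem_union_right _ hrmem, by omega⟩
        · have hi' : i ≠ 0 := by omega
          rw [if_neg hi'] at hsrc
          subst hsrc
          refine ⟨Finset.mem_union_right _ ?_, Finset.mem_union_right _ hrmem, by omega⟩
          exact Finset.mem_image.mpr ⟨i - 1, Finset.mem_range.mpr (by omega), rfl⟩
      · obtain ⟨h1, h2, h3⟩ := hI.2.2 q b r htr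
        exact ⟨Finset.mem_union_left _ h1, Finset.mem_union_left _ h2, h3⟩

lemma ext_evolve {M : NFA1} (hI : InvPT M) (x : List Bool) : ExtPT M (Evolve M x) := by
  rcases hrun : runPartial M M.start x with ⟨p, rest⟩
  rcases rest with _ | ⟨a, rs⟩
  · rw [evolve_halt hrun]
    split_ifs with h1 h2
    · exact ext_refl M
    · exact ext_refl M
    · exact ⟨rfl, fun _ _ _ h => h, Finset.subset_insert _ _, Finset.Subset.refl _⟩
  · rw [evolve_crash hrun]
    refine ⟨rfl, addChain_ext hI (run_crash_head hrun), ?_, ?_⟩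
    · rw [addChain_accept]; exact Finset.subset_union_left
    · rw [addChain_states]; exact Finset.subset_union_left

lemma inv_foldl {M : NFA1} (hI : InvPT M) (xs : List (List Bool)) :
    InvPT (xs.foldl Evolve M) := by
  induction xs generalizing M with
  | nil => exact hI
  | cons x xs ih => exact ih (inv_evolve hI x)

lemma ext_foldl {M : NFA1} (hI : InvPT M) (xs : List (List Bool)) :
    ExtPT M (xs.foldl Evolve M) := by
  induction xs generalizing M with
  | nil => exact ext_refl M
  | cons x xs ih => exact ext_trans (ext_evolve hI x) (ih (inv_evolve hI x))

lemma inv_empty : InvPT emptyNFA := by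
  refine ⟨by simp [emptyNFA], ?_, ?_⟩
  · intro q hq; simp [emptyNFA] at hq
  · intro q a r h; simp [emptyNFA] at h

def DepthInv (n : ℕ) (M : NFA1) : Prop :=
  ∃ d : ℕ → ℕ, d M.start = 0 ∧ (∀ q a r, M.trans q a = some r → d r = d q + 1) ∧
    ∀ q ∈ M.accept, d q = n + 1

lemma depthInv_empty (n : ℕ) : DepthInv n emptyNFA := by
  refine ⟨fun _ => 0, rfl, ?_, ?_⟩
  · intro q a r h; simp [emptyNFA] at h
  · intro q hq; simp [emptyNFA] at hq

lemma depthInv_evolve {M : NFA1} {n : ℕ} (hI : InvPT M) (hD : DepthInv n M)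
    {x : List Bool} (hx : x.length = n + 1) : DepthInv n (Evolve M x) := by
  obtain ⟨d, hd0, hdt, hacc⟩ := hD
  rcases hrun : runPartial M M.start x with ⟨p, rest⟩
  rcases rest with _ | ⟨a, rs⟩
  · rw [evolve_halt hrun]
    split_ifs with h1 h2
    · exact ⟨d, hd0, hdt, hacc⟩
    · exact ⟨d, hd0, hdt, hacc⟩
    · refine ⟨d, hd0, hdt, ?_⟩
      intro q hq
      rcases Finset.mem_insert.mp hq with rfl | hq
      · have := run_depth hdt hrun
        rw [this, hd0, hx]
        omega
      · exact hacc q hq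
  · rw [evolve_crash hrun]
    have hp : p ∈ M.states := by
      obtain ⟨x₁, -, h1⟩ := run_decomp hrun
      exact run_mem_states hI hI.1 h1
    have hpb := mem_states_lt_base hp
    set B := M.states.sup id + 1 with hB
    obtain ⟨x₁, hx1, h1⟩ := run_decomp hrun
    have hdp : d p = x₁.length := by rw [run_depth hdt h1, hd0]; omega
    have hlen : x₁.length + (a :: rs).length = x.length := by
      rw [hx1]; simp
    refine ⟨fun q => if q < B then d q else d p + 1 + (q - B), ?_, ?_, ?_⟩
    · rw [addChain_start]
      have := mem_states_lt_base hI.1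
      simp [this, hd0, hB]
    · intro q b r htr
      rcases addChain_trans_cases htr with ⟨i, hi, hsrc, -, hr⟩ | htr
      · subst hr
        have hrB : ¬ (B + i < B) := by omega
        rcases Nat.eq_zero_or_pos i with rfl | hi0
        · simp only [reduceIte] at hsrc
          subst hsrc
          simp only [← hB, hpb, reduceIte, hrB]
          omega
        · have hi' : i ≠ 0 := by omega
          rw [if_neg hi'] at hsrc
          subst hsrc
          have hqB : ¬ (B + (i - 1) < B) := by omega
          simp only [← hB, hrB, hqB, reduceIte]
          omega
      · obtain ⟨hq, hr, -⟩ := hI.2.2 q b r htr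
        have h1 := mem_states_lt_base hq
        have h2 := mem_states_lt_base hr
        simp only [← hB] at h1 h2
        simp only [h1, h2, reduceIte]
        exact hdt q b r htr
    · intro q hq
      rw [addChain_accept] at hq
      rcases Finset.mem_union.mp hq with hq | hq
      · have h1 := mem_states_lt_base (hI.2.1 q hq)
        simp only [← hB] at h1
        simp only [h1, reduceIte]
        exact hacc q hq
      · rw [Finset.mem_singleton] at hq
        subst hq
        have h1 : ¬ (B + ((a :: rs).length - 1) < B) := by omega
        simp only [← hB, h1, reduceIte]
        have hL : (a :: rs).length ≥ 1 := by simp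
        omega

lemma depthInv_foldl {M : NFA1} {n : ℕ} (hI : InvPT M) (hD : DepthInv n M)
    {xs : List (List Bool)} (hxs : ∀ x ∈ xs, x.length = n + 1) :
    DepthInv n (xs.foldl Evolve M) := by
  induction xs generalizing M with
  | nil => exact hD
  | cons x xs ih =>
    exact ih (inv_evolve hI x) (depthInv_evolve hI hD (hxs x (by simp)))
      (fun y hy => hxs y (by simp [hy]))

lemma runPartial_congr {M M' : NFA1} (h : M.trans = M'.trans) (q : ℕ) (x : List Bool) :
    runPartial M q x = runPartial M' q x := by
  induction x generalizing q with
  | nil => rfl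
  | cons a x ih =>
    rw [runPartial_cons, runPartial_cons, h]
    cases htr : M'.trans q a with
    | none => rfl
    | some p => exact ih p

/-- the set of strings accepted by PT₁ at any stage is finite; and if all
strings of length n+1 are input (in any order) before any string of length n, then every
string z of length n either crashes (and is accepted via fresh states), or halts in a
state that is accepting or one step away from an accepting state, its status being
determined by the prior inputs (the automaton is left unchanged). -/
theorem pt1_finite_and_length_saturation :
    (∀ xs : List (List Bool), Set.Finite {w : List Bool | (evolveAll xs).Accepts w}) ∧
    ∀ (n : ℕ) (ys : List (List Bool)),
      (∀ y ∈ ys, y.length = n + 1) →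
      (∀ y : List Bool, y.length = n + 1 → y ∈ ys) →
      ∀ z : List Bool, z.length = n →
        ((runPartial (evolveAll ys) (evolveAll ys).start z).2 ≠ [] ∧
            (Evolve (evolveAll ys) z).Accepts z) ∨
        (∃ p, runPartial (evolveAll ys) (evolveAll ys).start z = (p, []) ∧
            (p ∈ (evolveAll ys).accept ∨ oneStepAcc (evolveAll ys) p = true) ∧
            Evolve (evolveAll ys) z = evolveAll ys) := by
  constructor
  · intro xs
    have hI : InvPT (evolveAll xs) := inv_foldl inv_empty xs
    apply Set.Finite.subset (List.finite_length_le Bool ((evolveAll xs).states.sup id))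
    intro w hw
    obtain ⟨h2, h1⟩ := hw
    have hrunw : runPartial (evolveAll xs) (evolveAll xs).start w
        = ((runPartial (evolveAll xs) (evolveAll xs).start w).1, []) := by
      rw [← h2]
    have hle := run_le hI hrunw
    have hmem := hI.2.1 _ h1
    have hlt := mem_states_lt_base hmem
    simp only [Set.mem_setOf_eq]
    omega
  · intro n ys hys hall z hz
    have hIM : InvPT (evolveAll ys) := inv_foldl inv_empty ys
    rcases hrun : runPartial (evolveAll ys) (evolveAll ys).start z with ⟨p, rest⟩
    rcases rest with _ | ⟨c, cs⟩
    case right.cons =>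
      left
      refine ⟨by simp, ?_⟩
      rw [evolve_crash hrun]
      exact addChain_accepts_self hIM hrun (by simp)
    case right.nil =>
      right
      have hmem : z ++ [true] ∈ ys := hall _ (by simp [hz])
      obtain ⟨u, v, huv⟩ := List.append_of_mem hmem
      have hA : InvPT (u.foldl Evolve emptyNFA) := inv_foldl inv_empty u
      have hDA : DepthInv n (u.foldl Evolve emptyNFA) :=
        depthInv_foldl inv_empty (depthInv_empty n)
          (fun x hx => hys x (by rw [huv]; exact List.mem_append_left _ hx))
      set A := u.foldl Evolve emptyNFA with hAdef
      set B := Evolve A (z ++ [true]) with hBdef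
      have hMB : evolveAll ys = v.foldl Evolve B := by
        rw [evolveAll, huv, List.foldl_append, List.foldl_cons]
      have hIB : InvPT B := inv_evolve hA _
      have hextBM : ExtPT B (evolveAll ys) := by
        rw [hMB]; exact ext_foldl hIB v
      have claim : ∃ p', runPartial B B.start z = (p', []) ∧
          (p' ∈ B.accept ∨ ∃ a r, B.trans p' a = some r ∧ r ∈ B.accept) := by
        rcases hruA : runPartial A A.start (z ++ [true]) with ⟨q, rest₁⟩
        rcases rest₁ with _ | ⟨b, bs⟩
        · rcases hz' : runPartial A A.start z with ⟨p', r'⟩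
          have hr' : r' = [] := by
            by_contra hne
            have hcr := run_append_crash hz' hne [true]
            have h3 := hcr.symm.trans hruA
            have h4 := congrArg Prod.snd h3
            simp at h4
          subst hr'
          have hstep : A.trans p' true = some q := by
            have h5 := run_append_full hz' [true]
            rw [hruA] at h5
            exact run_single h5.symm
          rw [evolve_halt hruA] at hBdef
          by_cases h1 : q ∈ A.accept
          · rw [if_pos h1] at hBdef
            rw [hBdef]
            exact ⟨p', hz', Or.inr ⟨true, q, hstep, h1⟩⟩
          · rw [if_neg h1] at hBdef
            by_cases h2 : oneStepAcc A q = true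
            · exfalso
              obtain ⟨d, hd0, hdt, hacc⟩ := hDA
              obtain ⟨b, r, htr2, hr⟩ := oneStepAcc_iff.mp h2
              have hq1 : d q = n + 1 := by
                rw [run_depth hdt hruA, hd0]
                simp [hz]
              have h6 := hdt _ _ _ htr2
              have h7 := hacc r hr
              omega
            · rw [if_neg h2] at hBdef
              have hBtrans : B.trans = A.trans := by rw [hBdef]
              have hBstart : B.start = A.start := by rw [hBdef]
              refine ⟨p', ?_, Or.inr ⟨true, q, ?_, ?_⟩⟩
              · rw [hBstart]
                exact (runPartial_congr hBtrans _ _).trans hz'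
              · rw [hBtrans]; exact hstep
              · rw [hBdef]; simp
        · have hBc : B = addChain A q (b :: bs) := by rw [hBdef, evolve_crash hruA]
          have hfull : runPartial B B.start (z ++ [true])
              = ((A.states.sup id + 1) + ((b :: bs).length - 1), []) := by
            rw [hBc, addChain_start]
            exact addChain_run_full hA hruA (by simp)
          rcases hz' : runPartial B B.start z with ⟨p'', r''⟩
          have hr'' : r'' = [] := by
            by_contra hne
            have hcr := run_append_crash hz' hne [true]
            have h3 := hcr.symm.trans hfull
            have h4 := congrArg Prod.snd h3
            simp at h4
          subst hr''
          refine ⟨p'', rfl,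
            Or.inr ⟨true, (A.states.sup id + 1) + ((b :: bs).length - 1), ?_, ?_⟩⟩
          · apply run_single
            have h5 := run_append_full hz' [true]
            rw [hfull] at h5
            exact h5.symm
          · rw [hBc, addChain_accept]
            exact Finset.mem_union_right _ (Finset.mem_singleton_self _)
      obtain ⟨p', hp'run, hp'acc⟩ := claim
      have hrunM : runPartial (evolveAll ys) (evolveAll ys).start z = (p', []) := by
        have h8 := run_mono hextBM.2.1 hp'run
        rw [← hextBM.1] at h8
        exact h8
      have hpp : p = p' := by
        rw [hrun] at hrunM
        exact ((Prod.mk.injEq _ _ _ _).mp hrunM).1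
      subst hpp
      have hOsA : p ∈ (evolveAll ys).accept ∨ oneStepAcc (evolveAll ys) p = true := by
        rcases hp'acc with h | ⟨a, r, htr, hr⟩
        · exact Or.inl (hextBM.2.2.1 h)
        · exact Or.inr (oneStepAcc_iff.mpr ⟨a, r, hextBM.2.1 _ _ _ htr, hextBM.2.2.1 hr⟩)
      refine ⟨p, rfl, hOsA, ?_⟩
      rw [evolve_halt hrun]
      by_cases ha : p ∈ (evolveAll ys).accept
      · rw [if_pos ha]
      · rw [if_neg ha, if_pos (hOsA.resolve_left ha)]
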